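/- In the setting of the averaged iteration x_{n+1} = g_τ(x_n) with g_τ(x) = τ x + (1−τ) f(x), setting y_n := f(x_n) − x_n, the identity y_{n+1} − τ y_n = f(x_{n+1}) − f(x_n) holds for all n ≥ 0; moreover, for all n ≥ 1 and ℓ ≥ 2, x_{n+ℓ+1} − x_{n+1} = τ(τ^{−ℓ} − 1) y_{n+ℓ} − Σ_{k=1}^{ℓ−1} (τ^{−k} − 1)(y_{n+k+1} − τ y_{n+k}). -/
import Mathlib


open Filter Topology

/-- algebraic identities for the averaged iteration. With
`y_n = f(x_n) - x_n`: `y_{n+1} - τ y_n = f(x_{n+1}) - f(x_n)` for all `n`, and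
for `n ≥ 1`, `ℓ ≥ 2`,
`x_{n+ℓ+1} - x_{n+1} = τ(τ^{-ℓ} - 1) y_{n+ℓ} - ∑_{k=1}^{ℓ-1} (τ^{-k} - 1)(y_{n+k+1} - τ y_{n+k})`. -/
theorem stmt_15 {X : Type*} [NormedAddCommGroup X] [NormedSpace ℝ X]
    (M : Set X) (hMconv : Convex ℝ M)
    (f : X → X) (τ : ℝ) (hτ0 : 0 < τ) (hτ1 : τ < 1)
    (x : ℕ → X) (hxM : ∀ n, x n ∈ M)
    (hiter : ∀ n, x (n + 1) = τ • x n + (1 - τ) • f (x n))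
    (y : ℕ → X) (hy : ∀ n, y n = f (x n) - x n) :
    (∀ n, y (n + 1) - τ • y n = f (x (n + 1)) - f (x n)) ∧
    (∀ n ≥ 1, ∀ ℓ ≥ 2,
      x (n + ℓ + 1) - x (n + 1) =
        (τ * (τ ^ (-(ℓ : ℤ)) - 1)) • y (n + ℓ) -
          ∑ k ∈ Finset.Icc 1 (ℓ - 1),
            (τ ^ (-(k : ℤ)) - 1) • (y (n + k + 1) - τ • y (n + k))) := by
  have hτ : τ ≠ 0 := ne_of_gt hτ0
  have step : ∀ m, x (m + 1) = x m + (1 - τ) • y m := by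
    intro m; rw [hiter, hy]; module
  constructor
  · intro n
    rw [hy, hy, hiter n]
    module
  · intro n _ ℓ hℓ
    induction ℓ, hℓ using Nat.le_induction with
    | base =>
      simp only [show (2:ℕ) - 1 = 1 from rfl, Finset.Icc_self, Finset.sum_singleton]
      have h1 : x (n + 2 + 1) = x (n + 2) + (1 - τ) • y (n + 2) := step (n + 2)
      have h2 : x (n + 2) = x (n + 1) + (1 - τ) • y (n + 1) := by
        have := step (n + 1); rwa [show n + 1 + 1 = n + 2 from rfl] at this
      rw [h1, h2]
      simp only [zpow_neg, zpow_natCast]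
      match_scalars <;> field_simp <;> ring
    | succ ℓ hℓ2 IH =>
      have hsum : ∀ F : ℕ → X, ∑ k ∈ Finset.Icc 1 (ℓ + 1 - 1), F k =
          (∑ k ∈ Finset.Icc 1 (ℓ - 1), F k) + F ℓ := by
        intro F
        have h2 : ℓ - 1 + 1 = ℓ := by omega
        have hle : 1 ≤ ℓ - 1 + 1 := by omega
        have := Finset.sum_Icc_succ_top (a := 1) (b := ℓ - 1) hle F
        rw [h2] at this
        simpa using this
      rw [hsum]
      have hstep : x (n + (ℓ + 1) + 1) = x (n + ℓ + 1) + (1 - τ) • y (n + ℓ + 1) := by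
        have := step (n + ℓ + 1)
        rwa [show n + ℓ + 1 + 1 = n + (ℓ + 1) + 1 by omega] at this
      rw [hstep]
      have hx : x (n + ℓ + 1) = (x (n + ℓ + 1) - x (n + 1)) + x (n + 1) := by abel
      rw [hx, IH, show n + (ℓ + 1) = n + ℓ + 1 by omega]
      simp only [zpow_neg, zpow_natCast]
      push_cast
      have hp : (τ:ℝ) ^ ℓ ≠ 0 := pow_ne_zero _ hτ
      match_scalars <;> field_simp <;> ring
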